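/- Let λ₁,…,λₙ be distinct elements of a field of characteristic zero, 0 < k < n, and let e_r denote the r-th elementary symmetric polynomial in k variables. For 0 ≤ r·1 ≤ k(n−k), if the symmetric polynomial e_r(x₁,…,x_k)^m has total degree rm < k(n−k), then ∑_{I⊂[n],|I|=k} e_r(λ_I)^m / ∏_{i∈I}∏_{j∈Iᶜ}(λ_i−λ_j) = 0. -/

import Mathlib

set_option linter.unusedSectionVars false

open Finset MvPolynomial

section Aux

variable {F : Type*} [Field F] [CharZero F] {n : ℕ}

def ltP (s : Finset (Fin n)) : Finset (Fin n × Fin n) :=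
  (s ×ˢ s).filter fun p => p.1 < p.2

noncomputable def Vp (F : Type*) [Field F] {n : ℕ} (s : Finset (Fin n)) :
    MvPolynomial (Fin n) F :=
  ∏ p ∈ ltP s, (X p.2 - X p.1)

noncomputable def Dp (F : Type*) [Field F] {n : ℕ} (s : Finset (Fin n)) :
    MvPolynomial (Fin n) F :=
  ∏ p ∈ s ×ˢ sᶜ, (X p.1 - X p.2)

def eps (F : Type*) [Field F] {n : ℕ} (s : Finset (Fin n)) : F :=
  ∏ p ∈ s ×ˢ sᶜ, (if p.1 < p.2 then (-1 : F) else 1)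

theorem vdm_eps_mul_self (s : Finset (Fin n)) : eps F s * eps F s = 1 := by
  rw [eps, ← prod_mul_distrib]
  apply prod_eq_one
  intro p _
  split <;> norm_num

theorem vdm_mixed (s : Finset (Fin n)) :
    Dp F s = C (eps F s) *
      ∏ p ∈ (ltP (univ : Finset (Fin n))).filter
          (fun p => ¬(p.1 ∈ s ∧ p.2 ∈ s) ∧ ¬(p.1 ∉ s ∧ p.2 ∉ s)), (X p.2 - X p.1) := by
  have key : ∀ p ∈ s ×ˢ sᶜ, (X p.1 - X p.2 : MvPolynomial (Fin n) F) =
      (if p.1 < p.2 then (-1 : MvPolynomial (Fin n) F) else 1) *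
        (X (if p.1 < p.2 then p else p.swap).2 - X (if p.1 < p.2 then p else p.swap).1) := by
    intro p hp
    split_ifs with h
    · ring
    · simp [Prod.swap]
  rw [Dp, Finset.prod_congr rfl key, prod_mul_distrib]
  congr 1
  · rw [eps, map_prod]
    apply prod_congr rfl
    intro p _
    split_ifs <;> simp
  · -- reindex by sorting
    apply Finset.prod_nbij (fun p => if p.1 < p.2 then p else p.swap)
    · intro p hp
      simp only [mem_product, mem_compl] at hp
      have hne : p.1 ≠ p.2 := fun h => hp.2 (h ▸ hp.1)
      simp only [mem_filter, ltP, mem_product, mem_univ, true_and]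
      split_ifs with h
      · exact ⟨h, fun hc => hp.2 hc.2, fun hc => hc.1 hp.1⟩
      · exact ⟨lt_of_le_of_ne (not_lt.mp h) (Ne.symm hne),
          fun hc => hp.2 hc.1, fun hc => hc.2 hp.1⟩
    · intro p hp q hq hpq
      simp only [mem_coe, mem_product, mem_compl] at hp hq
      dsimp only at hpq
      split_ifs at hpq with h1 h2 h2
      · exact hpq
      · exfalso
        have : p.1 = q.2 := congrArg Prod.fst hpq
        exact hq.2 (this ▸ hp.1)
      · exfalso
        have : p.2 = q.1 := congrArg Prod.fst hpq
        exact hp.2 (this ▸ hq.1) |>.elim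
      · exact Prod.ext
          (congrArg Prod.snd hpq) (congrArg Prod.fst hpq)
    · intro q hq
      simp only [mem_coe, mem_filter, ltP, mem_product] at hq
      obtain ⟨⟨-, hlt⟩, h1, h2⟩ := hq
      by_cases hs : q.1 ∈ s
      · refine ⟨q, ?_, ?_⟩
        · simp only [mem_coe, mem_product, mem_compl]
          exact ⟨hs, fun hc => h1 ⟨hs, hc⟩⟩
        · simp [hlt]
      · refine ⟨q.swap, ?_, ?_⟩
        · simp only [mem_coe, mem_product, mem_compl, Prod.swap]
          have h2s : q.2 ∈ s := by
            by_contra hc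
            exact h2 ⟨hs, hc⟩
          exact ⟨h2s, hs⟩
        · simp [Prod.swap, not_lt.mpr hlt.le]
    · intro p hp
      rfl

theorem vdm_factorization (s : Finset (Fin n)) :
    Vp F (univ : Finset (Fin n)) = C (eps F s) * Dp F s * Vp F s * Vp F sᶜ := by
  have h1 : (ltP (univ : Finset (Fin n))).filter (fun p => p.1 ∈ s ∧ p.2 ∈ s) = ltP s := by
    ext p; simp [ltP]; tauto
  have h2 : ((ltP (univ : Finset (Fin n))).filter (fun p => ¬(p.1 ∈ s ∧ p.2 ∈ s))).filter
      (fun p => p.1 ∉ s ∧ p.2 ∉ s) = ltP sᶜ := by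
    rw [Finset.filter_filter]
    ext p; simp [ltP]; tauto
  have e1 := Finset.prod_filter_mul_prod_filter_not (ltP (univ : Finset (Fin n)))
    (fun p => p.1 ∈ s ∧ p.2 ∈ s) (fun p => (X p.2 - X p.1 : MvPolynomial (Fin n) F))
  have e2 := Finset.prod_filter_mul_prod_filter_not
    ((ltP (univ : Finset (Fin n))).filter (fun p => ¬(p.1 ∈ s ∧ p.2 ∈ s)))
    (fun p => p.1 ∉ s ∧ p.2 ∉ s) (fun p => (X p.2 - X p.1 : MvPolynomial (Fin n) F))
  rw [h2, Finset.filter_filter] at e2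
  rw [h1] at e1
  have e3 : C (eps F s) * Dp F s =
      ∏ p ∈ (ltP (univ : Finset (Fin n))).filter
        (fun p => ¬(p.1 ∈ s ∧ p.2 ∈ s) ∧ ¬(p.1 ∉ s ∧ p.2 ∉ s)), (X p.2 - X p.1) := by
    rw [vdm_mixed s, ← mul_assoc, ← map_mul, vdm_eps_mul_self, map_one, one_mul]
  rw [Vp, ← e1, ← e2, ← e3, Vp, Vp]
  ring

end Aux
section Aux2

variable {F : Type*} [Field F] [CharZero F] {n : ℕ}

theorem vdm_eval_Vp_univ (v : Fin n → F) :
    eval v (Vp F (univ : Finset (Fin n))) = (Matrix.vandermonde v).det := by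
  rw [Matrix.det_vandermonde, Vp, map_prod, Finset.prod_sigma']
  apply Finset.prod_nbij (fun p => (⟨p.1, p.2⟩ : Σ _ : Fin n, Fin n))
  · intro p hp
    simp only [ltP, mem_filter, mem_product] at hp
    simp [Finset.mem_sigma, Finset.mem_Ioi, hp.2]
  · intro p hp q hq h
    obtain ⟨h1, h2⟩ := Sigma.mk.inj_iff.mp h
    exact Prod.ext h1 (eq_of_heq h2)
  · intro x hx
    simp only [mem_coe, Finset.mem_sigma, Finset.mem_Ioi] at hx
    exact ⟨(x.1, x.2), by simp [ltP, hx.2], rfl⟩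
  · intro p hp
    simp [eval_X]

theorem vdm_eval_swap (v : Fin n → F) (τ : Equiv.Perm (Fin n)) :
    eval (v ∘ τ) (Vp F (univ : Finset (Fin n))) =
      ((Equiv.Perm.sign τ : ℤ) : F) * eval v (Vp F (univ : Finset (Fin n))) := by
  rw [vdm_eval_Vp_univ, vdm_eval_Vp_univ]
  have h : Matrix.vandermonde (v ∘ τ) = (Matrix.vandermonde v).submatrix τ id := rfl
  rw [h, Matrix.det_permute]

theorem vdm_eval_ne_zero {v : Fin n → F} (hv : Function.Injective v) :
    eval v (Vp F (univ : Finset (Fin n))) ≠ 0 := by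
  rw [vdm_eval_Vp_univ, Matrix.det_vandermonde_ne_zero_iff]
  exact hv

theorem vdm_eval_eq_zero {v : Fin n → F} (hv : ¬Function.Injective v) :
    eval v (Vp F (univ : Finset (Fin n))) = 0 := by
  rw [vdm_eval_Vp_univ, Matrix.det_vandermonde_eq_zero_iff]
  simp only [Function.Injective, not_forall] at hv
  obtain ⟨i, j, hij, hne⟩ := hv
  exact ⟨i, j, hij, hne⟩

end Aux2

section Aux3

variable {F : Type*} [Field F] [CharZero F] {n k : ℕ}

theorem vdm_f_symm (r m : ℕ) (π : Equiv.Perm (Fin k)) :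
    rename (π : Fin k → Fin k) ((esymm (Fin k) F r) ^ m) = (esymm (Fin k) F r) ^ m := by
  rw [map_pow, esymm_isSymmetric (Fin k) F r π]

theorem vdm_num_eq (r m : ℕ) (v : Fin n → F) (τ : Equiv.Perm (Fin n))
    (I : Finset (Fin n)) (hI : I.card = k) (hJ : (I.image τ).card = k) :
    eval (fun a => v ((I.image τ).orderIsoOfFin hJ a : Fin n)) ((esymm (Fin k) F r) ^ m)
      = eval (fun a => (v ∘ τ) (I.orderIsoOfFin hI a : Fin n)) ((esymm (Fin k) F r) ^ m) := by
  have hmem : ∀ a : Fin k, τ (I.orderIsoOfFin hI a : Fin n) ∈ I.image τ := fun a =>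
    Finset.mem_image_of_mem τ (I.orderIsoOfFin hI a).2
  set g : Fin k → Fin k := fun a =>
    ((I.image τ).orderIsoOfFin hJ).symm ⟨τ (I.orderIsoOfFin hI a : Fin n), hmem a⟩ with hg
  have hginj : Function.Injective g := by
    intro a b hab
    have h1 := congrArg ((I.image τ).orderIsoOfFin hJ) hab
    simp only [hg, OrderIso.apply_symm_apply] at h1
    have h2 : τ (I.orderIsoOfFin hI a : Fin n) = τ (I.orderIsoOfFin hI b : Fin n) :=
      congrArg Subtype.val h1
    exact (I.orderIsoOfFin hI).injective (Subtype.coe_injective (τ.injective h2))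
  let π : Equiv.Perm (Fin k) := Equiv.ofBijective g (Finite.injective_iff_bijective.mp hginj)
  conv_lhs => rw [← vdm_f_symm r m π, eval_rename]
  have hw : ((fun a => v ((I.image τ).orderIsoOfFin hJ a : Fin n)) ∘ (π : Fin k → Fin k))
      = fun a => (v ∘ τ) (I.orderIsoOfFin hI a : Fin n) := by
    funext a
    show v ((I.image τ).orderIsoOfFin hJ (g a) : Fin n) = v (τ (I.orderIsoOfFin hI a : Fin n))
    congr 1
    simp only [hg, OrderIso.apply_symm_apply]
  rw [hw]

theorem vdm_compl_image (τ : Equiv.Perm (Fin n)) (I : Finset (Fin n)) :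
    (I.image τ)ᶜ = Iᶜ.image τ := by
  ext x
  simp only [mem_compl, mem_image, not_exists]
  constructor
  · intro hx
    exact ⟨τ.symm x, by
      intro hmem
      exact (hx (τ.symm x)) ⟨hmem, by simp⟩, by simp⟩
  · rintro ⟨y, hy, rfl⟩ z hz
    exact hy (τ.injective hz.2 ▸ hz.1)

theorem vdm_D_eq (v : Fin n → F) (τ : Equiv.Perm (Fin n)) (I : Finset (Fin n)) :
    ∏ i ∈ I.image τ, ∏ j ∈ (I.image τ)ᶜ, (v i - v j)
      = ∏ i ∈ I, ∏ j ∈ Iᶜ, ((v ∘ τ) i - (v ∘ τ) j) := by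
  rw [vdm_compl_image, Finset.prod_image (fun a _ b _ h => τ.injective h)]
  apply prod_congr rfl
  intro i _
  rw [Finset.prod_image (fun a _ b _ h => τ.injective h)]
  rfl

theorem vdm_S_eq (r m : ℕ) (v : Fin n → F) (τ : Equiv.Perm (Fin n)) :
    (∑ I : {s : Finset (Fin n) // s.card = k},
      eval (fun a => v (I.1.orderIsoOfFin I.2 a : Fin n)) ((esymm (Fin k) F r) ^ m) /
        ∏ i ∈ I.1, ∏ j ∈ I.1ᶜ, (v i - v j))
    = ∑ I : {s : Finset (Fin n) // s.card = k},
      eval (fun a => (v ∘ τ) (I.1.orderIsoOfFin I.2 a : Fin n)) ((esymm (Fin k) F r) ^ m) /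
        ∏ i ∈ I.1, ∏ j ∈ I.1ᶜ, ((v ∘ τ) i - (v ∘ τ) j) := by
  have hbij : Function.Bijective (fun I : {s : Finset (Fin n) // s.card = k} =>
      (⟨I.1.image τ, by rw [Finset.card_image_of_injective _ τ.injective, I.2]⟩ :
        {s : Finset (Fin n) // s.card = k})) := by
    rw [← Finite.injective_iff_bijective]
    intro I J h
    exact Subtype.ext (Finset.image_injective τ.injective (congrArg Subtype.val h))
  refine (Fintype.sum_bijective _ hbij _ _ ?_).symm
  intro I
  dsimp only
  rw [vdm_num_eq r m v τ I.1 I.2, vdm_D_eq v τ I.1]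

end Aux3

section Aux4

variable {F : Type*} [Field F] [CharZero F] {n k : ℕ}

noncomputable def Ap (F : Type*) [Field F] (n k r m : ℕ) : MvPolynomial (Fin n) F :=
  ∑ I : {s : Finset (Fin n) // s.card = k},
    C (eps F I.1) * rename (fun a : Fin k => (I.1.orderIsoOfFin I.2 a : Fin n))
      ((esymm (Fin k) F r) ^ m) * Vp F I.1 * Vp F I.1ᶜ

theorem vdm_eval_Ap (r m : ℕ) {v : Fin n → F} (hv : Function.Injective v) :
    eval v (Ap F n k r m) =
      (∑ I : {s : Finset (Fin n) // s.card = k},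
        eval (fun a => v (I.1.orderIsoOfFin I.2 a : Fin n)) ((esymm (Fin k) F r) ^ m) /
          ∏ i ∈ I.1, ∏ j ∈ I.1ᶜ, (v i - v j)) * eval v (Vp F (univ : Finset (Fin n))) := by
  rw [Ap, map_sum, Finset.sum_mul]
  apply Finset.sum_congr rfl
  intro I _
  have hD : eval v (Dp F I.1) = ∏ i ∈ I.1, ∏ j ∈ I.1ᶜ, (v i - v j) := by
    rw [Dp, map_prod, Finset.prod_product]
    simp
  have hDne : (∏ i ∈ I.1, ∏ j ∈ I.1ᶜ, (v i - v j)) ≠ 0 := by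
    apply Finset.prod_ne_zero_iff.mpr
    intro i hi
    apply Finset.prod_ne_zero_iff.mpr
    intro j hj
    have : i ≠ j := fun h => (Finset.mem_compl.mp hj) (h ▸ hi)
    exact sub_ne_zero_of_ne (fun h => this (hv h))
  rw [vdm_factorization I.1]
  simp only [map_mul, eval_C, eval_rename]
  rw [hD]
  have hcmp : (v ∘ fun a : Fin k => (I.1.orderIsoOfFin I.2 a : Fin n))
      = fun a => v (I.1.orderIsoOfFin I.2 a : Fin n) := rfl
  rw [hcmp]
  field_simp

theorem vdm_rename_Ap (r m : ℕ) (τ : Equiv.Perm (Fin n)) (hτ : Equiv.Perm.sign τ = -1) :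
    rename (τ : Fin n → Fin n) (Ap F n k r m) = - Ap F n k r m := by
  have key : ∀ v : Fin n → F,
      eval v ((rename (τ : Fin n → Fin n) (Ap F n k r m) + Ap F n k r m) *
        Vp F (univ : Finset (Fin n))) = eval v 0 := by
    intro v
    rw [map_mul, map_add, eval_rename, map_zero]
    by_cases hv : Function.Injective v
    · have hvτ : Function.Injective (v ∘ τ) := hv.comp τ.injective
      rw [vdm_eval_Ap r m hvτ, vdm_eval_Ap r m hv, vdm_eval_swap v τ, hτ,
        ← vdm_S_eq r m v τ]
      push_cast
      ring
    · rw [vdm_eval_eq_zero hv, mul_zero]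
  have h0 := MvPolynomial.funext key
  have hV : (Vp F (univ : Finset (Fin n))) ≠ 0 := by
    have hinj : Function.Injective (fun i : Fin n => ((i : ℕ) : F)) :=
      fun a b h => Fin.val_injective (Nat.cast_injective h)
    intro h
    exact vdm_eval_ne_zero hinj (by rw [h, map_zero])
  rcases mul_eq_zero.mp h0 with h | h
  · exact eq_neg_of_add_eq_zero_left h
  · exact absurd h hV

end Aux4

section Aux5

variable {F : Type*} [Field F] [CharZero F] {n k : ℕ}

theorem vdm_ltP_card (s : Finset (Fin n)) : 2 * (ltP s).card + s.card = s.card * s.card := by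
  classical
  set T := s ×ˢ s with hTdef
  have h0 := Finset.card_filter_add_card_filter_not (s := T)
    (p := fun p => p.1 < p.2)
  have h1 := Finset.card_filter_add_card_filter_not
    (s := T.filter (fun p => ¬ p.1 < p.2)) (p := fun p => p.2 < p.1)
  have e1 : (T.filter (fun p => ¬ p.1 < p.2)).filter (fun p => p.2 < p.1)
      = T.filter (fun p => p.2 < p.1) := by
    rw [Finset.filter_filter]
    apply Finset.filter_congr
    intro p _
    constructor
    · exact fun h => h.2
    · exact fun h => ⟨fun h' => absurd h (lt_asymm h'), h⟩
  have e2 : (T.filter (fun p => ¬ p.1 < p.2)).filter (fun p => ¬ p.2 < p.1)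
      = T.filter (fun p => p.1 = p.2) := by
    rw [Finset.filter_filter]
    apply Finset.filter_congr
    intro p _
    constructor
    · exact fun h => le_antisymm (not_lt.mp h.2) (not_lt.mp h.1)
    · exact fun h => ⟨by rw [h]; exact lt_irrefl _, by rw [h]; exact lt_irrefl _⟩
  have e3 : (T.filter (fun p => p.2 < p.1)).card = (T.filter (fun p => p.1 < p.2)).card := by
    apply Finset.card_nbij (fun p => p.swap)
    · intro p hp
      simp only [mem_coe, mem_filter, mem_product, hTdef] at hp ⊢
      exact ⟨⟨hp.1.2, hp.1.1⟩, hp.2⟩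
    · intro p _ q _ h
      exact Prod.swap_injective h
    · intro q hq
      refine ⟨q.swap, ?_, by simp⟩
      simp only [mem_coe, mem_filter, mem_product, hTdef, Prod.fst_swap, Prod.snd_swap] at hq ⊢
      exact ⟨⟨hq.1.2, hq.1.1⟩, hq.2⟩
  have e4 : (T.filter (fun p => p.1 = p.2)).card = s.card := by
    apply Finset.card_nbij (fun p => p.1)
    · intro p hp
      simp only [mem_coe, mem_filter, mem_product, hTdef] at hp
      exact hp.1.1
    · intro p hp q hq h
      simp only [mem_coe, mem_filter, hTdef] at hp hq
      exact Prod.ext h (by rw [← hp.2, ← hq.2]; exact h)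
    · intro x hx
      rw [Finset.mem_coe] at hx
      refine ⟨(x, x), ?_, rfl⟩
      simp only [mem_coe, mem_filter, mem_product, hTdef]
      simp [hx]
  have hcard : T.card = s.card * s.card := by rw [hTdef, Finset.card_product]
  have hltP : (ltP s).card = (T.filter (fun p => p.1 < p.2)).card := rfl
  rw [e1, e2, e3, e4] at h1
  omega

theorem vdm_finset_sum : ∀ (N : ℕ) (s : Finset ℕ), s.card = N → ∑ i ∈ range N, i ≤ ∑ x ∈ s, x := by
  intro N
  induction N with
  | zero => intro s _; simp
  | succ N ih =>
    intro s hs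
    have hne : s.Nonempty := card_pos.mp (by omega)
    have hsub : s ⊆ range (s.max' hne + 1) :=
      fun x hx => mem_range.mpr (Nat.lt_succ_of_le (le_max' s x hx))
    have hM : N ≤ s.max' hne := by
      have := card_le_card hsub
      rw [card_range] at this
      omega
    have h1 : (s.erase (s.max' hne)).card = N := by
      rw [card_erase_of_mem (max'_mem s hne), hs]
      omega
    have h2 := ih (s.erase (s.max' hne)) h1
    have h3 : ∑ x ∈ s.erase (s.max' hne), x + s.max' hne = ∑ x ∈ s, x :=
      Finset.sum_erase_add s _ (max'_mem s hne)
    rw [sum_range_succ]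
    omega

theorem vdm_inj_sum {g : Fin n → ℕ} (hg : Function.Injective g) :
    ∑ i ∈ range n, i ≤ ∑ i : Fin n, g i := by
  have himg : (Finset.univ.image g).card = n := by
    rw [Finset.card_image_of_injective _ hg, card_univ, Fintype.card_fin]
  have := vdm_finset_sum n (Finset.univ.image g) himg
  rwa [Finset.sum_image (fun a _ b _ h => hg h)] at this

theorem vdm_deg_Vp (s : Finset (Fin n)) : (Vp F s).totalDegree ≤ (ltP s).card := by
  refine (totalDegree_finset_prod _ _).trans ?_
  calc ∑ p ∈ ltP s, (X p.2 - X p.1 : MvPolynomial (Fin n) F).totalDegree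
      ≤ ∑ _p ∈ ltP s, 1 := by
        apply Finset.sum_le_sum
        intro p _
        refine (totalDegree_sub _ _).trans ?_
        rw [totalDegree_X, totalDegree_X]
        exact le_refl 1
    _ = (ltP s).card := by rw [Finset.sum_const, smul_eq_mul, mul_one]

theorem vdm_deg_esymm (r : ℕ) : (esymm (Fin k) F r).totalDegree ≤ r := by
  rw [esymm]
  refine (totalDegree_finset_sum _ _).trans ?_
  apply Finset.sup_le
  intro t ht
  refine (totalDegree_finset_prod _ _).trans ?_
  calc ∑ i ∈ t, (X i : MvPolynomial (Fin k) F).totalDegree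
      ≤ ∑ _i ∈ t, 1 := Finset.sum_le_sum fun i _ => le_of_eq (totalDegree_X _)
    _ = t.card := by rw [Finset.sum_const, smul_eq_mul, mul_one]
    _ = r := (Finset.mem_powersetCard.mp ht).2

end Aux5

section Aux6

variable {F : Type*} [Field F] [CharZero F] {n k : ℕ}

theorem vdm_Ap_eq_zero (hk0 : 0 < k) (hk : k < n) (r m : ℕ) (hrm : r * m < k * (n - k)) :
    Ap F n k r m = 0 := by
  set T := (ltP (univ : Finset (Fin n))).card with hTdef
  have hTcard := vdm_ltP_card (univ : Finset (Fin n))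
  rw [card_univ, Fintype.card_fin] at hTcard
  have hTpos : 0 < T := by
    have h2n : 2 * n ≤ n * n := Nat.mul_le_mul_right n (by omega)
    omega
  have hdegA : (Ap F n k r m).totalDegree < T := by
    refine lt_of_le_of_lt (totalDegree_finset_sum _ _) ?_
    rw [Finset.sup_lt_iff hTpos]
    intro I _
    have h1 : (rename (fun a : Fin k => (I.1.orderIsoOfFin I.2 a : Fin n))
        ((esymm (Fin k) F r) ^ m)).totalDegree ≤ r * m := by
      refine (totalDegree_rename_le _ _).trans ?_
      refine (totalDegree_pow _ _).trans ?_
      calc m * (esymm (Fin k) F r).totalDegree ≤ m * r :=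
            Nat.mul_le_mul_left m (vdm_deg_esymm r)
        _ = r * m := Nat.mul_comm m r
    have h2 := vdm_deg_Vp (F := F) I.1
    have h3 := vdm_deg_Vp (F := F) I.1ᶜ
    have hc1 := vdm_ltP_card I.1
    have hc2 := vdm_ltP_card I.1ᶜ
    rw [I.2] at hc1
    have hcompl : I.1ᶜ.card = n - k := by
      rw [Finset.card_compl, Fintype.card_fin, I.2]
    rw [hcompl] at hc2
    have hdle : (C (eps F I.1) * rename (fun a : Fin k => (I.1.orderIsoOfFin I.2 a : Fin n))
        ((esymm (Fin k) F r) ^ m) * Vp F I.1 * Vp F I.1ᶜ).totalDegree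
        ≤ r * m + (ltP I.1).card + (ltP I.1ᶜ).card := by
      refine (totalDegree_mul _ _).trans ?_
      have := (totalDegree_mul (C (eps F I.1) * rename (fun a : Fin k =>
        (I.1.orderIsoOfFin I.2 a : Fin n)) ((esymm (Fin k) F r) ^ m)) (Vp F I.1))
      have h0 := (totalDegree_mul (C (eps F I.1)) (rename (fun a : Fin k =>
        (I.1.orderIsoOfFin I.2 a : Fin n)) ((esymm (Fin k) F r) ^ m)))
      rw [totalDegree_C] at h0
      omega
    refine lt_of_le_of_lt hdle ?_
    -- arithmetic
    have hkn : k ≤ n := le_of_lt hk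
    set j := n - k with hj
    have hkj : k + j = n := by omega
    set a := (ltP I.1).card
    set b := (ltP I.1ᶜ).card
    -- hc1 : 2a + k = k*k, hc2 : 2b + j = j*j, hTcard : 2T + n = n*n, hrm : r*m < k*j
    have hnn : n * n = k * k + 2 * (k * j) + j * j := by rw [← hkj]; ring
    omega
  -- coefficient argument
  by_contra hA0
  obtain ⟨d, hd⟩ := support_nonempty.mpr hA0
  have hdeg : (d.sum fun _ e => e) ≤ (Ap F n k r m).totalDegree := le_totalDegree hd
  by_cases hinj : Function.Injective (d : Fin n → ℕ)
  · have h1 := vdm_inj_sum hinj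
    have h2 : (d.sum fun _ e => e) = ∑ i : Fin n, d i :=
      Finsupp.sum_fintype _ _ (fun _ => rfl)
    have h3 : (∑ i ∈ range n, i) * 2 = n * (n - 1) := sum_range_id_mul_two n
    have h4 : n * (n - 1) + n = n * n := by
      obtain _ | n' := n
      · omega
      · simp only [Nat.add_sub_cancel]
        ring
    omega
  · simp only [Function.Injective, not_forall] at hinj
    obtain ⟨i, j, hij, hne⟩ := hinj
    have hτ : Equiv.Perm.sign (Equiv.swap i j) = -1 := Equiv.Perm.sign_swap hne
    have hr := vdm_rename_Ap (F := F) (n := n) (k := k) r m (Equiv.swap i j) hτ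
    have hmd : Finsupp.mapDomain (⇑(Equiv.swap i j)) d = d := by
      ext x
      rw [Finsupp.mapDomain_equiv_apply, Equiv.symm_swap]
      rcases eq_or_ne x i with rfl | hxi
      · rw [Equiv.swap_apply_left]; exact hij.symm
      rcases eq_or_ne x j with rfl | hxj
      · rw [Equiv.swap_apply_right]; exact hij
      · rw [Equiv.swap_apply_of_ne_of_ne hxi hxj]
    have hco := coeff_rename_mapDomain (⇑(Equiv.swap i j)) (Equiv.injective _)
      (Ap F n k r m) d
    rw [hmd, hr, coeff_neg] at hco
    have hzero : coeff d (Ap F n k r m) = 0 := by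
      have h2 : (2 : F) * coeff d (Ap F n k r m) = 0 := by linear_combination - hco
      exact (mul_eq_zero.mp h2).resolve_left two_ne_zero
    exact (mem_support_iff.mp hd) hzero

end Aux6

theorem sum_esymm_pow_div_prod_eq_zero {F : Type*} [Field F] [CharZero F]
    (n k : ℕ) (hk0 : 0 < k) (hk : k < n)
    (lam : Fin n → F) (hlam : Function.Injective lam)
    (r m : ℕ) (hrm : r * m < k * (n - k)) :
    ∑ I : {s : Finset (Fin n) // s.card = k},
        (MvPolynomial.eval (fun i => lam ((I.1.orderIsoOfFin I.2) i : Fin n))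
            ((MvPolynomial.esymm (Fin k) F r) ^ m)) /
          ∏ i ∈ I.1, ∏ j ∈ I.1ᶜ, (lam i - lam j) = 0 := by
  have hA := vdm_Ap_eq_zero (F := F) hk0 hk r m hrm
  have h := vdm_eval_Ap (F := F) (n := n) (k := k) r m hlam
  rw [hA, map_zero] at h
  have hV := vdm_eval_ne_zero (F := F) hlam
  rcases mul_eq_zero.mp h.symm with h' | h'
  · exact h'
  · exact absurd h' hV
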